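/- Let n ≥ 2 and let B_n be the braid group on n strands, presented by generators σ₁,…,σ_{n−1} and relations σᵢσⱼ = σⱼσᵢ for |i−j| > 1 and σᵢσ_{i+1}σᵢ = σ_{i+1}σᵢσ_{i+1}. Let K = Frac(ℚ[x₁,…,x_n]) and let t_j denote the image of x_j in K. The symmetric group S_n acts on K by field automorphisms permuting the variables (ρ·t_j = t_{ρ(j)}), hence acts on GL_n(K) by applying this automorphism entrywise; form the semidirect product GL_n(K) ⋊ S_n. Then there exists a group homomorphism B_n → GL_n(K) ⋊ S_n sending σᵢ to the pair (U_{n;i}(t_i), (i, i+1)), where (i, i+1) denotes the transposition of i and i+1. -/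

import Mathlib

open Matrix

/-- `U K n i t` is the `n × n` matrix over `K` (1-indexed rows/columns `1,…,n`) that equals
the identity matrix except that its `2 × 2` block in rows `i, i+1` and columns `i, i+1`
is `((1-t, 1), (t, 0))`.  A row index `r : Fin n` corresponds to the 1-indexed row `r.val + 1`. -/
def GassnerU (K : Type*) [CommRing K] (n : ℕ) (i : ℕ) (t : K) : Matrix (Fin n) (Fin n) K :=
  Matrix.of fun r c =>
    if r.val + 1 = i ∧ c.val + 1 = i then 1 - t
    else if r.val + 1 = i ∧ c.val = i then 1
    else if r.val = i ∧ c.val + 1 = i then t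
    else if r.val = i ∧ c.val = i then 0
    else if r = c then 1 else 0

/-- The field `K = Frac(ℚ[x₁,…,x_n])`. -/
abbrev GassnerField (n : ℕ) : Type := FractionRing (MvPolynomial (Fin n) ℚ)

/-- `t_j`, the image of the variable `x_j` in `K = Frac(ℚ[x₁,…,x_n])`. -/
noncomputable def tvar (n : ℕ) (j : Fin n) : GassnerField n :=
  algebraMap (MvPolynomial (Fin n) ℚ) (GassnerField n) (MvPolynomial.X j)

/-- The action of `S_n` on `K = Frac(ℚ[x₁,…,x_n])` by field automorphisms permuting the
variables: `ρ · t_j = t_{ρ(j)}`. -/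
noncomputable def permFieldAut (n : ℕ) : Equiv.Perm (Fin n) →* RingAut (GassnerField n) where
  toFun ρ := IsFractionRing.ringEquivOfRingEquiv
    (MvPolynomial.renameEquiv ℚ ρ).toRingEquiv
  map_one' := by
    apply RingEquiv.toRingHom_injective
    apply IsLocalization.ringHom_ext (nonZeroDivisors (MvPolynomial (Fin n) ℚ))
    ext p : 2 <;>
      simp [RingEquiv.toRingHom_eq_coe, RingHom.comp_apply, RingHom.coe_coe,
        IsFractionRing.ringEquivOfRingEquiv_algebraMap] <;>
      rfl
  map_mul' := by
    intro σ τ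
    apply RingEquiv.toRingHom_injective
    apply IsLocalization.ringHom_ext (nonZeroDivisors (MvPolynomial (Fin n) ℚ))
    have hmul : ∀ (a b : RingAut (GassnerField n)) (x : GassnerField n),
        (a * b) x = a (b x) := fun _ _ _ => rfl
    ext p : 2 <;>
      simp only [RingEquiv.toRingHom_eq_coe, RingHom.comp_apply, RingHom.coe_coe, hmul,
        IsFractionRing.ringEquivOfRingEquiv_algebraMap] <;>
      simp [MvPolynomial.rename_X]

/-- The action of `S_n` on `GL_n(K)` obtained by applying the variable-permuting field
automorphism entrywise. -/
noncomputable def glAut (n : ℕ) :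
    Equiv.Perm (Fin n) →* MulAut (GL (Fin n) (GassnerField n)) where
  toFun ρ := Units.mapEquiv ((permFieldAut n ρ).mapMatrix.toMulEquiv)
  map_one' := by
    ext x
    simp
  map_mul' := by
    intro σ τ
    ext x
    simp

/-- The braid relations: `σᵢσⱼ = σⱼσᵢ` for `|i - j| > 1` and `σᵢσᵢ₊₁σᵢ = σᵢ₊₁σᵢσᵢ₊₁`.
A generator index `p : Fin (n-1)` stands for the generator `σ_{p+1}` of `B_n`. -/
def braidRels (n : ℕ) : Set (FreeGroup (Fin (n - 1))) :=
  {r | ∃ p q : Fin (n - 1),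
    ((p.val + 1 < q.val ∨ q.val + 1 < p.val) ∧
      r = FreeGroup.of p * FreeGroup.of q * (FreeGroup.of q * FreeGroup.of p)⁻¹) ∨
    (q.val = p.val + 1 ∧
      r = FreeGroup.of p * FreeGroup.of q * FreeGroup.of p *
        (FreeGroup.of q * FreeGroup.of p * FreeGroup.of q)⁻¹)}

/-- The braid group `B_n`, presented by generators `σ₁, …, σ_{n-1}` and the braid
relations. -/
abbrev BraidGroup (n : ℕ) := PresentedGroup (braidRels n)


namespace GassnerAux
open Matrix

variable {F : Type*} [Field F] {n : ℕ}

lemma sbm_apply (i j r s : Fin n) (c : F) :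
    single i j c r s = if i = r ∧ j = s then c else 0 := rfl

def Mmat (a b : Fin n) (t : F) : Matrix (Fin n) (Fin n) F :=
  1 + single a a (-t) + single a b 1 + single b a t
    + single b b (-1)

def Vmat (a b : Fin n) (t : F) : Matrix (Fin n) (Fin n) F :=
  1 + single a a (-1) + single a b t⁻¹ + single b a 1
    + single b b (-t⁻¹)

theorem Mmat_mul_Vmat (a b : Fin n) (hab : a ≠ b) (t : F) (ht : t ≠ 0) :
    Mmat a b t * Vmat a b t = 1 := by
  simp only [Mmat, Vmat, add_mul, mul_add, one_mul, mul_one, ne_eq,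
    single_mul_single_same, single_mul_single_of_ne, hab, hab.symm,
    not_false_eq_true, mul_inv_cancel₀ ht, add_zero, zero_add]
  ext i j
  by_cases hia : i = a <;> by_cases hib : i = b <;> by_cases hja : j = a <;>
    by_cases hjb : j = b <;>
    simp_all [Matrix.add_apply, Matrix.one_apply, sbm_apply] <;>
    (try split_ifs) <;> (try simp_all) <;> (try field_simp) <;> (try ring)

theorem Vmat_mul_Mmat (a b : Fin n) (hab : a ≠ b) (t : F) (ht : t ≠ 0) :
    Vmat a b t * Mmat a b t = 1 := by
  simp only [Mmat, Vmat, add_mul, mul_add, one_mul, mul_one, ne_eq,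
    single_mul_single_same, single_mul_single_of_ne, hab, hab.symm,
    not_false_eq_true, inv_mul_cancel₀ ht, add_zero, zero_add]
  ext i j
  by_cases hia : i = a <;> by_cases hib : i = b <;> by_cases hja : j = a <;>
    by_cases hjb : j = b <;>
    simp_all [Matrix.add_apply, Matrix.one_apply, sbm_apply] <;>
    (try split_ifs) <;> (try simp_all) <;> (try field_simp) <;> (try ring)

set_option maxHeartbeats 2000000 in
theorem Mmat_comm (a b c d : Fin n) (hac : a ≠ c) (had : a ≠ d) (hbc : b ≠ c)
    (hbd : b ≠ d) (s u : F) :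
    Mmat a b s * Mmat c d u = Mmat c d u * Mmat a b s := by
  simp only [Mmat, add_mul, mul_add, one_mul, mul_one, ne_eq,
    single_mul_single_same, single_mul_single_of_ne, hac, had, hbc, hbd,
    hac.symm, had.symm, hbc.symm, hbd.symm, not_false_eq_true, add_zero, zero_add]
  abel

set_option maxHeartbeats 4000000 in
theorem Mmat_braid (a b d : Fin n) (hab : a ≠ b) (hbd : b ≠ d) (had : a ≠ d) (s u : F) :
    Mmat a b s * Mmat b d s * Mmat a b u = Mmat b d u * Mmat a b s * Mmat b d s := by
  simp only [Mmat, add_mul, mul_add, one_mul, mul_one, ne_eq,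
    single_mul_single_same, single_mul_single_of_ne, hab, hbd, had,
    hab.symm, hbd.symm, had.symm, not_false_eq_true, add_zero, zero_add]
  ext i j
  by_cases hia : i = a <;> by_cases hib : i = b <;> by_cases hid : i = d <;>
    by_cases hja : j = a <;> by_cases hjb : j = b <;> by_cases hjd : j = d <;>
    simp_all [Matrix.add_apply, Matrix.one_apply, sbm_apply] <;>
    (try split_ifs) <;> (try simp_all) <;> (try ring)

theorem GassnerU_eq_Mmat {F : Type*} [Field F] {n : ℕ} (a b : Fin n)
    (hb : (b : ℕ) = (a : ℕ) + 1) (t : F) :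
    GassnerU F n ((a : ℕ) + 1) t = Mmat a b t := by
  ext r c
  by_cases hra : (r : ℕ) = (a : ℕ) <;> by_cases hrb : (r : ℕ) = (b : ℕ) <;>
    by_cases hca : (c : ℕ) = (a : ℕ) <;> by_cases hcb : (c : ℕ) = (b : ℕ) <;>
    simp_all [GassnerU, Mmat, Matrix.add_apply, Matrix.one_apply, sbm_apply,
      Fin.ext_iff] <;>
    (try omega) <;> (try split_ifs) <;> (try simp_all) <;> (try omega) <;> (try ring)

noncomputable def gUnit {F : Type*} [Field F] {n : ℕ} (a b : Fin n) (t : F)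
    (hab : a ≠ b) (ht : t ≠ 0) : GL (Fin n) F :=
  ⟨Mmat a b t, Vmat a b t, Mmat_mul_Vmat a b hab t ht, Vmat_mul_Mmat a b hab t ht⟩

lemma tvar_ne_zero (n : ℕ) (j : Fin n) : tvar n j ≠ 0 := by
  simp only [tvar, ne_eq, IsFractionRing.to_map_eq_zero_iff]
  exact MvPolynomial.X_ne_zero j

lemma permFieldAut_tvar {n : ℕ} (ρ : Equiv.Perm (Fin n)) (j : Fin n) :
    permFieldAut n ρ (tvar n j) = tvar n (ρ j) := by
  simp [permFieldAut, tvar, IsFractionRing.ringEquivOfRingEquiv_algebraMap]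

lemma permFieldAut_tvar_ne_zero {n : ℕ} (ρ : Equiv.Perm (Fin n)) (j : Fin n) :
    permFieldAut n ρ (tvar n j) ≠ 0 := by
  rw [permFieldAut_tvar]; exact tvar_ne_zero n _

lemma mapMatrix_Mmat {F : Type*} [Field F] {n : ℕ} (e : F ≃+* F) (a b : Fin n) (t : F) :
    e.mapMatrix (Mmat a b t) = Mmat a b (e t) := by
  ext i j
  show e (Mmat a b t i j) = Mmat a b (e t) i j
  simp only [Mmat, Matrix.add_apply, Matrix.one_apply, sbm_apply, map_add,
    apply_ite e, _root_.map_one, map_zero, map_neg]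

lemma glAut_gUnit {n : ℕ} (ρ : Equiv.Perm (Fin n)) (a b : Fin n)
    (j : Fin n) (hab : a ≠ b) :
    glAut n ρ (gUnit a b (tvar n j) hab (tvar_ne_zero n j)) =
      gUnit a b (tvar n (ρ j)) hab (tvar_ne_zero n _) := by
  apply Units.ext
  show (permFieldAut n ρ).mapMatrix (Mmat a b (tvar n j)) = Mmat a b (tvar n (ρ j))
  rw [← permFieldAut_tvar]
  exact mapMatrix_Mmat ((permFieldAut n ρ) : _ ≃+* _) a b _


end GassnerAux


/-- There exists a group homomorphism `B_n → GL_n(K) ⋊ S_n` (the Gassner invariant) sending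
`σᵢ` to the pair `(U_{n;i}(t_i), (i, i+1))`. -/
theorem gassner_invariant_exists (n : ℕ) (hn : 2 ≤ n) :
    ∃ Φ : BraidGroup n →*
        SemidirectProduct (GL (Fin n) (GassnerField n)) (Equiv.Perm (Fin n)) (glAut n),
      ∀ i : Fin (n - 1),
        ((Φ (PresentedGroup.of i)).left : Matrix (Fin n) (Fin n) (GassnerField n)) =
            GassnerU (GassnerField n) n (i.val + 1)
              (tvar n ⟨i.val, by have := i.isLt; omega⟩) ∧
          (Φ (PresentedGroup.of i)).right =
            Equiv.swap (⟨i.val, by have := i.isLt; omega⟩ : Fin n)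
              ⟨i.val + 1, by have := i.isLt; omega⟩ := by
  classical
  open GassnerAux Equiv in
  have hlt : ∀ p : Fin (n - 1), p.val + 1 < n := fun p => by have := p.isLt; omega
  let ia : Fin (n - 1) → Fin n := fun p => ⟨p.val, by have := p.isLt; omega⟩
  let ib : Fin (n - 1) → Fin n := fun p => ⟨p.val + 1, hlt p⟩
  have hne : ∀ p, ia p ≠ ib p := fun p => by simp [ia, ib, Fin.ext_iff]
  let f : Fin (n - 1) →
      SemidirectProduct (GL (Fin n) (GassnerField n)) (Equiv.Perm (Fin n)) (glAut n) :=
    fun p => ⟨gUnit (ia p) (ib p) (tvar n (ia p)) (hne p) (tvar_ne_zero n _),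
      Equiv.swap (ia p) (ib p)⟩
  have hrel : ∀ r ∈ braidRels n, FreeGroup.lift f r = 1 := by
    rintro r ⟨p, q, ⟨hgap, rfl⟩ | ⟨hq, rfl⟩⟩
    · simp only [_root_.map_mul, map_inv, FreeGroup.lift_apply_of]
      rw [mul_inv_eq_one]
      have h1 : ia p ≠ ia q := by simp [ia, Fin.ext_iff]; omega
      have h2 : ia p ≠ ib q := by simp [ia, ib, Fin.ext_iff]; omega
      have h3 : ib p ≠ ia q := by simp [ia, ib, Fin.ext_iff]; omega
      have h4 : ib p ≠ ib q := by simp [ib, Fin.ext_iff]; omega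
      have sp : Equiv.swap (ia p) (ib p) (ia q) = ia q :=
        swap_apply_of_ne_of_ne h1.symm h3.symm
      have sq : Equiv.swap (ia q) (ib q) (ia p) = ia p :=
        swap_apply_of_ne_of_ne h1 h2
      apply SemidirectProduct.ext
      · show _ * glAut n (Equiv.swap (ia p) (ib p)) _ =
          _ * glAut n (Equiv.swap (ia q) (ib q)) _
        rw [glAut_gUnit, glAut_gUnit, sp, sq]
        apply Units.ext
        exact Mmat_comm (ia p) (ib p) (ia q) (ib q) h1 h2 h3 h4 _ _
      · show Equiv.swap (ia p) (ib p) * Equiv.swap (ia q) (ib q) =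
          Equiv.swap (ia q) (ib q) * Equiv.swap (ia p) (ib p)
        have : Equiv.swap (ia q) (ib q) =
            Equiv.swap (Equiv.swap (ia p) (ib p) (ia q))
              (Equiv.swap (ia p) (ib p) (ib q)) := by
          rw [sp, swap_apply_of_ne_of_ne h2.symm h4.symm]
        calc Equiv.swap (ia p) (ib p) * Equiv.swap (ia q) (ib q)
            = Equiv.swap (ia p) (ib p) * Equiv.swap (ia q) (ib q) *
              (Equiv.swap (ia p) (ib p))⁻¹ * Equiv.swap (ia p) (ib p) := by
              group
          _ = Equiv.swap (ia q) (ib q) * Equiv.swap (ia p) (ib p) := by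
              rw [← swap_apply_apply, ← this]
    · simp only [_root_.map_mul, map_inv, FreeGroup.lift_apply_of]
      rw [mul_inv_eq_one]
      -- a = ia p, b = ib p = ia q, d = ib q
      have hba : ia q = ib p := by simp [ia, ib, Fin.ext_iff, hq]
      have hab : ia p ≠ ib p := hne p
      have hbd : ib p ≠ ib q := by simp [ib, Fin.ext_iff]; omega
      have had : ia p ≠ ib q := by simp [ia, ib, Fin.ext_iff]; omega
      have s2a : Equiv.swap (ia q) (ib q) (ia p) = ia p := by
        rw [hba]; exact swap_apply_of_ne_of_ne hab had
      have s1b : Equiv.swap (ia p) (ib p) (ib p) = ia p := swap_apply_right _ _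
      apply SemidirectProduct.ext
      · show _ * glAut n (Equiv.swap (ia p) (ib p)) _ *
            glAut n (Equiv.swap (ia p) (ib p) * Equiv.swap (ia q) (ib q)) _ =
          _ * glAut n (Equiv.swap (ia q) (ib q)) _ *
            glAut n (Equiv.swap (ia q) (ib q) * Equiv.swap (ia p) (ib p)) _
        rw [_root_.map_mul, _root_.map_mul]
        show _ * glAut n (Equiv.swap (ia p) (ib p)) _ *
            glAut n (Equiv.swap (ia p) (ib p)) (glAut n (Equiv.swap (ia q) (ib q)) _) =
          _ * glAut n (Equiv.swap (ia q) (ib q)) _ *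
            glAut n (Equiv.swap (ia q) (ib q)) (glAut n (Equiv.swap (ia p) (ib p)) _)
        rw [glAut_gUnit, glAut_gUnit, glAut_gUnit, glAut_gUnit]
        have e3 : Equiv.swap (ia q) (ib q) (ia p) = ia p := s2a
        have e1 : Equiv.swap (ia p) (ib p) (ia q) = ia p := by
          rw [hba]; exact swap_apply_right _ _
        have e2 : Equiv.swap (ia p) (ib p) (Equiv.swap (ia q) (ib q) (ia p)) = ib p := by
          rw [s2a]; exact swap_apply_left _ _
        have e4 : Equiv.swap (ia q) (ib q) (Equiv.swap (ia p) (ib p) (ia q)) = ia p := by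
          rw [e1]; exact s2a
        rw [e2, e4, e3, e1]
        have hfp : (f p).left = gUnit (ia p) (ib p) (tvar n (ia p)) (hne p)
            (tvar_ne_zero n _) := rfl
        have hfq : (f q).left = gUnit (ia q) (ib q) (tvar n (ia q)) (hne q)
            (tvar_ne_zero n _) := rfl
        rw [hfp, hfq]
        simp only [hba]
        apply Units.ext
        show Mmat (ia p) (ib p) (tvar n (ia p)) * Mmat (ib p) (ib q) (tvar n (ia p)) *
            Mmat (ia p) (ib p) (tvar n (ib p)) =
          Mmat (ib p) (ib q) (tvar n (ib p)) * Mmat (ia p) (ib p) (tvar n (ia p)) *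
            Mmat (ib p) (ib q) (tvar n (ia p))
        exact Mmat_braid (ia p) (ib p) (ib q) hab hbd had _ _
      · show Equiv.swap (ia p) (ib p) * Equiv.swap (ia q) (ib q) *
            Equiv.swap (ia p) (ib p) =
          Equiv.swap (ia q) (ib q) * Equiv.swap (ia p) (ib p) *
            Equiv.swap (ia q) (ib q)
        rw [hba]
        have L : Equiv.swap (ia p) (ib p) * Equiv.swap (ib p) (ib q) *
            Equiv.swap (ia p) (ib p) = Equiv.swap (ia p) (ib q) := by
          rw [swap_comm (ia p) (ib p), swap_comm (ib p) (ib q)]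
          exact swap_mul_swap_mul_swap hbd.symm had.symm
        have R : Equiv.swap (ib p) (ib q) * Equiv.swap (ia p) (ib p) *
            Equiv.swap (ib p) (ib q) = Equiv.swap (ib q) (ia p) :=
          swap_mul_swap_mul_swap hab had
        rw [L, R, Equiv.swap_comm]
  refine ⟨PresentedGroup.toGroup hrel, fun i => ?_⟩
  rw [PresentedGroup.toGroup.of]
  refine ⟨?_, rfl⟩
  show ((gUnit (ia i) (ib i) (tvar n (ia i)) (hne i) (tvar_ne_zero n _) :
      GL (Fin n) (GassnerField n)) : Matrix (Fin n) (Fin n) (GassnerField n)) = _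
  show Mmat (ia i) (ib i) (tvar n (ia i)) = _
  exact (GassnerU_eq_Mmat (ia i) (ib i) rfl _).symm
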